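/- arXiv:1607.08420 — 2 statements merged into one kernel-verified Lean document; each statement's English description precedes it below -/
import Mathlib

section
/- Let φ_k(x) = c_k(L_k(x) − L_{k+2}(x)) with c_k = 1/√(4k+6), where L_n is the n-th Legendre polynomial. Then the stiffness entries a_{jk} = ∫_{−1}^{1} φ_k'(x) φ_j'(x) dx satisfy a_{jk} = 1 if j = k and a_{jk} = 0 if j ≠ k. -/
open Polynomial

/-- The `n`-th Legendre polynomial, via Rodrigues' formula. -/
noncomputable def legendre (n : ℕ) : Polynomial ℝ :=
  C ((1 : ℝ) / (2 ^ n * n.factorial)) * derivative^[n] ((X ^ 2 - 1) ^ n)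

/-- The basis function φ_k(x) = c_k (L_k(x) - L_{k+2}(x)), c_k = 1/√(4k+6). -/
noncomputable def phi (k : ℕ) (x : ℝ) : ℝ :=
  (1 / Real.sqrt (4 * k + 6)) * ((legendre k).eval x - (legendre (k + 2)).eval x)

namespace LegAux

noncomputable abbrev u (n : ℕ) : ℝ[X] := (X ^ 2 - 1) ^ n

lemma integrable (p : ℝ[X]) :
    IntervalIntegrable (fun x => p.eval x) MeasureTheory.volume (-1:ℝ) 1 :=
  p.continuous.intervalIntegrable _ _

lemma poly_ibp (p q : ℝ[X]) :
    (∫ x in (-1:ℝ)..1, p.eval x * (derivative q).eval x)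
      = p.eval 1 * q.eval 1 - p.eval (-1) * q.eval (-1)
        - ∫ x in (-1:ℝ)..1, (derivative p).eval x * q.eval x :=
  intervalIntegral.integral_mul_deriv_eq_deriv_mul
    (u := fun x => p.eval x) (v := fun x => q.eval x)
    (u' := fun x => (derivative p).eval x) (v' := fun x => (derivative q).eval x)
    (fun x _ => p.hasDerivAt x) (fun x _ => q.hasDerivAt x) (integrable _) (integrable _)

lemma dvd_iterate_derivative {j n : ℕ} (h : j ≤ n) :
    (X ^ 2 - 1 : ℝ[X]) ^ (n - j) ∣ derivative^[j] (u n) := by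
  induction j with
  | zero => simp
  | succ j ih =>
    obtain ⟨q, hq⟩ := ih (le_of_lt (Nat.lt_of_succ_le h))
    have hnj : n - j = (n - (j+1)) + 1 := by omega
    rw [Function.iterate_succ_apply', hq, derivative_mul, derivative_pow, hnj,
      Nat.add_sub_cancel]
    exact ⟨C ((n - (j+1) : ℕ) + 1 : ℝ) * derivative (X^2-1) * q + (X^2-1) * derivative q,
      by push_cast; ring⟩

lemma eval_iterate_derivative_u {j n : ℕ} (h : j < n) (x : ℝ) (hx : x^2 = 1) :
    (derivative^[j] (u n)).eval x = 0 := by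
  obtain ⟨q, hq⟩ := dvd_iterate_derivative (le_of_lt h)
  have hnj : n - j = (n - j - 1) + 1 := by omega
  have hxx : x * x - 1 = 0 := by rw [← hx]; ring
  rw [hq, hnj]
  simp [pow_succ, hxx]

/-- iterated integration by parts -/
lemma iter_ibp (n : ℕ) (p q : ℝ[X])
    (hq : ∀ j < n, (derivative^[j] q).eval 1 = 0 ∧ (derivative^[j] q).eval (-1) = 0) :
    (∫ x in (-1:ℝ)..1, p.eval x * (derivative^[n] q).eval x)
      = (-1)^n * ∫ x in (-1:ℝ)..1, (derivative^[n] p).eval x * q.eval x := by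
  induction n generalizing p with
  | zero => simp
  | succ n ih =>
    have key : (∫ x in (-1:ℝ)..1, p.eval x * (derivative^[n+1] q).eval x)
        = - ∫ x in (-1:ℝ)..1, (derivative p).eval x * (derivative^[n] q).eval x := by
      rw [Function.iterate_succ_apply', poly_ibp p (derivative^[n] q),
        (hq n (by omega)).1, (hq n (by omega)).2]
      ring
    rw [key, ih (derivative p) (fun j hj => hq j (by omega)), Function.iterate_succ_apply]
    ring

lemma monic_u (n : ℕ) : (u n).Monic :=
  (by simpa using monic_X_pow_sub_C (1:ℝ) (n := 2) two_ne_zero : (X ^ 2 - 1 : ℝ[X]).Monic).pow n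

lemma natDegree_u (n : ℕ) : (u n).natDegree = 2 * n := by
  have h2 : (X ^ 2 - 1 : ℝ[X]).natDegree = 2 := by
    simpa using natDegree_X_pow_sub_C (n := 2) (r := (1:ℝ))
  rw [u, natDegree_pow, h2, mul_comm]

lemma iterate_derivative_u_self (n : ℕ) :
    derivative^[2*n] (u n) = C ((2*n).factorial : ℝ) := by
  rcases Nat.eq_zero_or_pos n with h | h
  · subst h; simp
  have hdeglt : (u n - X ^ (2*n)).degree < ((2*n : ℕ) : WithBot ℕ) := by
    have := degree_sub_lt (p := u n) (q := X ^ (2*n)) ?_ (monic_u n).ne_zero ?_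
    · rwa [degree_eq_natDegree (monic_u n).ne_zero, natDegree_u] at this
    · rw [degree_eq_natDegree (monic_u n).ne_zero, degree_X_pow, natDegree_u]
    · rw [(monic_u n).leadingCoeff, leadingCoeff_X_pow]
  have hd : derivative^[2*n] (u n - X ^ (2*n)) = 0 := by
    by_cases hz : u n - X ^ (2*n) = 0
    · simp [hz]
    · exact iterate_derivative_eq_zero ((natDegree_lt_iff_degree_lt hz).mpr hdeglt)
  have h0 : u n = (u n - X ^ (2*n)) + X ^ (2*n) := by ring
  rw [h0, iterate_map_add, hd, zero_add,
    iterate_derivative_X_pow_eq_smul, Nat.sub_self, pow_zero, Nat.descFactorial_self,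
    smul_eq_C_mul, mul_one]

lemma cont_pow (n : ℕ) : Continuous (fun x : ℝ => (x^2-1)^n) := by fun_prop

lemma Jrec (n : ℕ) :
    (2*(n:ℝ)+3) * (∫ x in (-1:ℝ)..1, (x^2-1)^(n+1))
      = -(2*n+2) * ∫ x in (-1:ℝ)..1, (x^2-1)^n := by
  have hftc : (∫ x in (-1:ℝ)..1,
      ((2*(n:ℝ)+3) * (x^2-1)^(n+1) + (2*n+2) * (x^2-1)^n)) = 0 := by
    have hd : ∀ x ∈ Set.uIcc (-1:ℝ) 1, HasDerivAt (fun y : ℝ => y * (y^2-1)^(n+1))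
        ((2*(n:ℝ)+3) * (x^2-1)^(n+1) + (2*n+2) * (x^2-1)^n) x := by
      intro x _
      have h1 : HasDerivAt (fun y : ℝ => y * (y^2-1)^(n+1))
          (1 * (x^2-1)^(n+1) + x * (((n+1:ℕ):ℝ) * (x^2-1)^n * (((2:ℕ):ℝ) * x^1))) x :=
        (hasDerivAt_id x).mul (((hasDerivAt_pow 2 x).sub_const 1).pow (n+1))
      convert h1 using 1
      push_cast
      ring
    rw [intervalIntegral.integral_eq_sub_of_hasDerivAt hd
      (((continuous_const.mul (cont_pow (n+1))).add
        (continuous_const.mul (cont_pow n))).intervalIntegrable _ _)]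
    norm_num
  rw [intervalIntegral.integral_add
      (f := fun x => (2*(n:ℝ)+3) * (x^2-1)^(n+1)) (g := fun x => (2*(n:ℝ)+2) * (x^2-1)^n)
      ((continuous_const.mul (cont_pow (n+1))).intervalIntegrable _ _)
      ((continuous_const.mul (cont_pow n)).intervalIntegrable _ _),
    intervalIntegral.integral_const_mul, intervalIntegral.integral_const_mul] at hftc
  linarith

lemma Jval (n : ℕ) :
    (∫ x in (-1:ℝ)..1, (x^2-1)^n)
      = (-1:ℝ)^n * 2^(2*n+1) * ((n.factorial : ℝ))^2 / ((2*n+1).factorial : ℝ) := by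
  induction n with
  | zero => norm_num
  | succ n ih =>
    have h3 : (2*(n:ℝ)+3) ≠ 0 := by positivity
    have hth := Jrec n
    rw [ih] at hth
    have hfac1 : ((n+1).factorial : ℝ) = (n+1) * n.factorial := by
      push_cast [Nat.factorial_succ]; ring
    have hfac2 : ((2*(n+1)+1).factorial : ℝ)
        = (2*n+3) * ((2*n+2) * (2*n+1).factorial) := by
      have h : 2*(n+1)+1 = (2*n+2)+1 := by ring
      rw [h, Nat.factorial_succ, Nat.factorial_succ]
      push_cast; ring
    have hne1 : ((2*n+1).factorial : ℝ) ≠ 0 := by positivity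
    have h2 : (2*(n:ℝ)+2) ≠ 0 := by positivity
    have hI : (∫ x in (-1:ℝ)..1, (x^2-1)^(n+1))
        = -(2*(n:ℝ)+2) * ((-1:ℝ)^n * 2^(2*n+1) * ((n.factorial:ℝ))^2 / ((2*n+1).factorial:ℝ))
          / (2*(n:ℝ)+3) := by
      rw [eq_div_iff h3]; linarith [hth]
    rw [hI, hfac1, hfac2]
    field_simp
    ring

lemma R0 (n : ℕ) : derivative (derivative (u (n+2)))
    = C ((2*(n:ℝ)+4)*(2*n+3)) * u (n+1) + C ((2*(n:ℝ)+2)*(2*n+4)) * u n := by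
  simp only [u, derivative_pow, derivative_mul, derivative_sub, derivative_one,
    derivative_X_pow, derivative_C, derivative_X, derivative_zero, Nat.add_sub_cancel,
    map_mul, map_add, map_ofNat, C_eq_natCast, C_1]
  push_cast
  simp only [map_add, map_mul, map_ofNat, C_eq_natCast, C_1, derivative_natCast,
    derivative_ofNat]
  ring

lemma legendre_deriv_rec (n : ℕ) :
    derivative (legendre (n+2)) = C (2*(n:ℝ)+3) * legendre (n+1) + derivative (legendre n) := by
  have key : derivative^[n+3] (u (n+2))
      = C ((2*(n:ℝ)+4)*(2*n+3)) * derivative^[n+1] (u (n+1))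
        + C ((2*(n:ℝ)+2)*(2*n+4)) * derivative^[n+1] (u n) := by
    rw [show n+3 = (n+1)+2 from rfl, Function.iterate_add_apply,
      show derivative^[2] (u (n+2)) = derivative (derivative (u (n+2))) from rfl, R0,
      iterate_map_add, iterate_derivative_C_mul, iterate_derivative_C_mul]
  have hfac1 : ((n+1).factorial : ℝ) = (n+1) * n.factorial := by
    push_cast [Nat.factorial_succ]; ring
  have hfac2 : ((n+2).factorial : ℝ) = (n+2) * ((n+1) * n.factorial) := by
    rw [Nat.factorial_succ]; push_cast [hfac1]; ring
  have hfne : (n.factorial : ℝ) ≠ 0 := by positivity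
  have h2 : (2:ℝ)^n ≠ 0 := by positivity
  have hc1 : (1:ℝ)/(2^(n+2) * (n+2).factorial) * ((2*(n:ℝ)+4)*(2*n+3))
      = (2*(n:ℝ)+3) * ((1:ℝ)/(2^(n+1) * (n+1).factorial)) := by
    rw [hfac1, hfac2]; field_simp; ring
  have hc2 : (1:ℝ)/(2^(n+2) * (n+2).factorial) * ((2*(n:ℝ)+2)*(2*n+4))
      = (1:ℝ)/(2^n * n.factorial) := by
    rw [hfac2]; field_simp; ring
  unfold legendre
  rw [derivative_C_mul, derivative_C_mul,
    ← Function.iterate_succ_apply' derivative, ← Function.iterate_succ_apply' derivative, key,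
    mul_add, ← mul_assoc, ← mul_assoc, ← C_mul, ← C_mul, hc1, hc2, C_mul]
  ring

lemma natDegree_legendre_le (n : ℕ) : (legendre n).natDegree ≤ n := by
  refine le_trans (natDegree_C_mul_le _ _) ?_
  refine le_trans (natDegree_iterate_derivative _ _) ?_
  rw [natDegree_u]; omega

lemma boundary (n : ℕ) : ∀ j < n, (derivative^[j] (u n)).eval 1 = 0 ∧
    (derivative^[j] (u n)).eval (-1) = 0 :=
  fun j hj => ⟨eval_iterate_derivative_u hj 1 (by norm_num),
    eval_iterate_derivative_u hj (-1) (by norm_num)⟩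

lemma integral_mul_legendre_eq (p : ℝ[X]) (n : ℕ) :
    (∫ x in (-1:ℝ)..1, p.eval x * (legendre n).eval x)
      = ((1:ℝ)/(2^n * n.factorial)) * ((-1)^n *
          ∫ x in (-1:ℝ)..1, (derivative^[n] p).eval x * (u n).eval x) := by
  have h1 : ∀ x : ℝ, p.eval x * (legendre n).eval x
      = ((1:ℝ)/(2^n * n.factorial)) * (p.eval x * (derivative^[n] (u n)).eval x) := by
    intro x; rw [legendre, eval_mul, eval_C]; ring
  simp_rw [h1]
  rw [intervalIntegral.integral_const_mul, iter_ibp n p (u n) (boundary n)]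

/-- orthogonality for m < n -/
lemma orth_lt {m n : ℕ} (h : m < n) :
    (∫ x in (-1:ℝ)..1, (legendre m).eval x * (legendre n).eval x) = 0 := by
  rw [integral_mul_legendre_eq]
  have hz : derivative^[n] (legendre m) = 0 :=
    iterate_derivative_eq_zero (lt_of_le_of_lt (natDegree_legendre_le m) h)
  simp [hz]

lemma orth {m n : ℕ} (h : m ≠ n) :
    (∫ x in (-1:ℝ)..1, (legendre m).eval x * (legendre n).eval x) = 0 := by
  rcases h.lt_or_gt with h | h
  · exact orth_lt h
  · calc (∫ x in (-1:ℝ)..1, (legendre m).eval x * (legendre n).eval x)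
        = ∫ x in (-1:ℝ)..1, (legendre n).eval x * (legendre m).eval x := by
          congr 1; funext x; ring
      _ = 0 := orth_lt h

lemma legendre_sq (n : ℕ) :
    (∫ x in (-1:ℝ)..1, (legendre n).eval x * (legendre n).eval x) = 2 / (2*(n:ℝ)+1) := by
  rw [integral_mul_legendre_eq]
  have hz : derivative^[n] (legendre n) = C ((1:ℝ)/(2^n * n.factorial) * (2*n).factorial) := by
    rw [legendre, iterate_derivative_C_mul, ← Function.iterate_add_apply,
      show n + n = 2*n from by ring, iterate_derivative_u_self, ← C_mul]
  rw [hz]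
  have h2 : ∀ x : ℝ, (C ((1:ℝ)/(2^n * n.factorial) * ((2*n).factorial:ℝ))).eval x * (u n).eval x
      = ((1:ℝ)/(2^n * n.factorial) * ((2*n).factorial:ℝ)) * (x^2-1)^n := by
    intro x
    rw [eval_C, eval_pow, eval_sub, eval_pow, eval_X, eval_one]
  simp_rw [h2]
  rw [intervalIntegral.integral_const_mul, Jval]
  have hfne : (n.factorial : ℝ) ≠ 0 := by positivity
  have hf2ne : ((2*n).factorial : ℝ) ≠ 0 := by positivity
  have h2ne : (2:ℝ)^n ≠ 0 := by positivity
  have hno : (2*(n:ℝ)+1) ≠ 0 := by positivity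
  have hfo : ((2*n+1).factorial : ℝ) = (2*(n:ℝ)+1) * ((2*n).factorial : ℝ) := by
    rw [Nat.factorial_succ]; push_cast; ring
  have hone : (-1:ℝ)^n * (-1:ℝ)^n = 1 := by
    rw [← pow_add]; exact Even.neg_one_pow ⟨n, by ring⟩
  have h4 : (2:ℝ)^(2*n+1) = 2 * ((2:ℝ)^n * (2:ℝ)^n) := by
    rw [pow_succ, two_mul, pow_add]; ring
  rw [hfo, h4]
  field_simp
  linear_combination hone


lemma deriv_phi (k : ℕ) (x : ℝ) :
    deriv (phi k) x
      = -((1 / Real.sqrt (4*k+6)) * (2*(k:ℝ)+3)) * (legendre (k+1)).eval x := by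
  have h : HasDerivAt (phi k)
      ((1 / Real.sqrt (4*(k:ℝ)+6)) * ((derivative (legendre k)).eval x
        - (derivative (legendre (k+2))).eval x)) x := by
    apply HasDerivAt.const_mul
    exact ((legendre k).hasDerivAt x).sub ((legendre (k+2)).hasDerivAt x)
  rw [h.deriv, legendre_deriv_rec k, eval_add, eval_mul, eval_C]
  ring

end LegAux

open LegAux in
/-- The stiffness matrix entries a_{jk} = ∫_{-1}^{1} φ_k'(x) φ_j'(x) dx equal δ_{jk}. -/
theorem stiffness_entries (j k : ℕ) :
    (∫ x in (-1 : ℝ)..1, deriv (phi k) x * deriv (phi j) x) =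
      if j = k then 1 else 0 := by
  have hint : ∀ x : ℝ, deriv (phi k) x * deriv (phi j) x
      = (-((1 / Real.sqrt (4*k+6)) * (2*(k:ℝ)+3)) * -((1 / Real.sqrt (4*j+6)) * (2*(j:ℝ)+3)))
        * ((legendre (k+1)).eval x * (legendre (j+1)).eval x) := by
    intro x; rw [deriv_phi, deriv_phi]; ring
  simp_rw [hint]
  rw [intervalIntegral.integral_const_mul]
  by_cases hjk : j = k
  · subst hjk
    rw [if_pos rfl, legendre_sq]
    have hsq : Real.sqrt (4*(j:ℝ)+6) ^ 2 = 4*(j:ℝ)+6 := Real.sq_sqrt (by positivity)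
    have hno : (2*((j:ℝ)+1)+1) ≠ 0 := by positivity
    have h2 : (4*(j:ℝ)+6) ≠ 0 := by positivity
    push_cast
    rw [show -(1 / Real.sqrt (4 * (j:ℝ) + 6) * (2 * (j:ℝ) + 3))
          * -(1 / Real.sqrt (4 * (j:ℝ) + 6) * (2 * (j:ℝ) + 3))
        = (2 * (j:ℝ) + 3)^2 / (Real.sqrt (4*(j:ℝ)+6))^2 by ring, hsq]
    field_simp
    ring
  · rw [if_neg hjk, orth (show k+1 ≠ j+1 by omega), mul_zero]
end

section
/- Let V be a complex inner product space, let A: V × V → ℂ be a Hermitian sesquilinear form (A(u,v) = conj(A(v,u))), let ψ be a bounded real multiplication operator, and suppose θ, ρ: [t₀,T] → V are differentiable and satisfy −i(∂_t(θ+ρ), v) + γ A(θ+ρ, v) − (ψ(θ+ρ), v) = 0 for v = θ(t), with γ ∈ ℝ and A(ρ(t), θ(t)) = 0 for all t. Then (1/2) d/dt ‖θ‖² = −Re(∂_t ρ, θ) − Im(ψρ, θ). -/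
/-- Energy identity: taking the imaginary part of the error equation with test
    function v = θ gives (1/2) d/dt ‖θ‖² = -Re(∂_t ρ, θ) - Im(ψρ, θ).
    Here the paper's inner product (u, v), conjugate-linear in the second slot,
    is expressed as `inner v u` in Mathlib's convention. -/
theorem energy_identity
    {V : Type*} [NormedAddCommGroup V] [InnerProductSpace ℂ V]
    (A : V → V → ℂ)
    (hherm : ∀ u v : V, A u v = starRingEnd ℂ (A v u))
    (hadd : ∀ u v w : V, A (u + v) w = A u w + A v w)
    (ψ : V →ₗ[ℂ] V)
    (hψreal : ∀ x y : V, (inner ℂ (ψ x) y : ℂ) = starRingEnd ℂ (inner ℂ (ψ y) x))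
    (γ t₀ T : ℝ)
    (θ ρ θ' ρ' : ℝ → V)
    (hθ : ∀ t ∈ Set.Icc t₀ T, HasDerivAt θ (θ' t) t)
    (hρ : ∀ t ∈ Set.Icc t₀ T, HasDerivAt ρ (ρ' t) t)
    (heq : ∀ t ∈ Set.Icc t₀ T,
      -Complex.I * (inner ℂ (θ t) (θ' t + ρ' t) : ℂ) +
        (γ : ℂ) * A (θ t + ρ t) (θ t) -
        (inner ℂ (θ t) (ψ (θ t + ρ t)) : ℂ) = 0)
    (horth : ∀ t ∈ Set.Icc t₀ T, A (ρ t) (θ t) = 0) :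
    ∀ t ∈ Set.Icc t₀ T,
      HasDerivAt (fun s => ‖θ s‖ ^ 2)
        (2 * (-(inner ℂ (θ t) (ρ' t) : ℂ).re - (inner ℂ (θ t) (ψ (ρ t)) : ℂ).im)) t := by
  intro t ht
  letI : InnerProductSpace ℝ V := InnerProductSpace.rclikeToReal ℂ V
  have hθt : HasDerivAt θ (θ' t) t := hθ t ht
  have hd := hθt.norm_sq
  convert hd using 1
  rw [real_inner_eq_re_inner ℂ]
  have hAsum : A (θ t + ρ t) (θ t) = A (θ t) (θ t) := by
    rw [hadd, horth t ht, add_zero]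
  have hAim : (A (θ t) (θ t)).im = 0 := by
    have h1 := congrArg Complex.im (hherm (θ t) (θ t))
    rw [Complex.conj_im] at h1
    linarith
  have hz : (inner ℂ (ψ (θ t)) (θ t) : ℂ).im = 0 := by
    have h1 := congrArg Complex.im (hψreal (θ t) (θ t))
    rw [Complex.conj_im] at h1
    linarith
  have hψim : ((inner ℂ (θ t) (ψ (θ t)) : ℂ)).im = 0 := by
    rw [← inner_conj_symm, Complex.conj_im, hz, neg_zero]
  have h := congrArg Complex.im (heq t ht)
  rw [hAsum] at h
  simp only [inner_add_right, map_add, Complex.add_im, Complex.add_re, Complex.sub_im, Complex.mul_im,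
    Complex.neg_im, Complex.neg_re, Complex.I_re, Complex.I_im, Complex.ofReal_im,
    Complex.ofReal_re, Complex.zero_im, hAim, hψim] at h
  simp only [RCLike.re]
  simp
  linarith
end
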